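/- arXiv:2601.13496 — 2 statements merged into one kernel-verified Lean document; each statement's English description precedes it below -/
import Mathlib

section
/- Let p : ℝ → ℝ be continuous and let a < b be real numbers. Define f(x) = ∫_{a}^{x} (x − t)·p(t) dt + ∫_{x}^{b} (b − t)·p(t) dt for x ∈ (a, b). Then f is differentiable on (a, b) with f′(x) = ∫_{a}^{x} p(t) dt − (b − x)·p(x). Moreover, if p(x) > 0, then f′(x) = 0 if and only if b = x + (1/p(x)) · ∫_{a}^{x} p(t) dt. -/
open MeasureTheory

lemma stmt4_rewrite (p : ℝ → ℝ) (hp : Continuous p) (a b y : ℝ) :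
    (∫ t in a..y, (y - t) * p t) + ∫ t in y..b, (b - t) * p t
      = (y - b) * (∫ t in a..y, p t) + ∫ t in a..b, (b - t) * p t := by
  have hint : ∀ c : ℝ, ∀ u v : ℝ, IntervalIntegrable (fun t => (c - t) * p t) volume u v :=
    fun c u v => (Continuous.mul (by continuity) hp).intervalIntegrable u v
  have hadj : (∫ t in a..y, (b - t) * p t) + ∫ t in y..b, (b - t) * p t
      = ∫ t in a..b, (b - t) * p t :=
    intervalIntegral.integral_add_adjacent_intervals (hint b a y) (hint b y b)
  have hsub : (∫ t in a..y, (y - t) * p t) - ∫ t in a..y, (b - t) * p t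
      = (y - b) * ∫ t in a..y, p t := by
    rw [← intervalIntegral.integral_sub (hint y a y) (hint b a y),
      ← intervalIntegral.integral_const_mul]
    congr 1; funext t; ring
  linarith [hadj, hsub]

/-- For continuous `p` and `a < b`, the function
`f(x) = ∫_a^x (x − t)·p(t) dt + ∫_x^b (b − t)·p(t) dt` is differentiable on `(a, b)`
with `f′(x) = ∫_a^x p(t) dt − (b − x)·p(x)`; moreover, when `p(x) > 0`, the
first-order condition `f′(x) = 0` holds iff `b = x + (1/p(x))·∫_a^x p(t) dt`. -/
theorem stmt4 (p : ℝ → ℝ) (hp : Continuous p) (a b : ℝ) (hab : a < b) :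
    ∀ x ∈ Set.Ioo a b,
      HasDerivAt
        (fun y => (∫ t in a..y, (y - t) * p t) + ∫ t in y..b, (b - t) * p t)
        ((∫ t in a..x, p t) - (b - x) * p x) x ∧
      (0 < p x →
        (((∫ t in a..x, p t) - (b - x) * p x = 0) ↔
          b = x + (1 / p x) * ∫ t in a..x, p t)) := by
  intro x hx
  constructor
  · have hP : HasDerivAt (fun y => ∫ t in a..y, p t) (p x) x :=
      intervalIntegral.integral_hasDerivAt_right (hp.intervalIntegrable a x)
        (hp.stronglyMeasurableAtFilter _ _) hp.continuousAt
    have hg : HasDerivAt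
        (fun y => (y - b) * (∫ t in a..y, p t) + ∫ t in a..b, (b - t) * p t)
        ((∫ t in a..x, p t) - (b - x) * p x) x := by
      have this : HasDerivAt (fun y => (y - b) * (∫ t in a..y, p t) + ∫ t in a..b, (b - t) * p t)
          ((1 * ∫ t in a..x, p t) + (x - b) * p x) x := (((hasDerivAt_id x).sub_const b).mul hP).add_const (∫ t in a..b, (b - t) * p t)
      convert this using 1
      ring
    have : (fun y => (∫ t in a..y, (y - t) * p t) + ∫ t in y..b, (b - t) * p t)
        = fun y => (y - b) * (∫ t in a..y, p t) + ∫ t in a..b, (b - t) * p t := by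
      funext y; exact stmt4_rewrite p hp a b y
    rw [this]; exact hg
  · intro hpx
    have hne : p x ≠ 0 := ne_of_gt hpx
    constructor
    · intro h
      field_simp
      nlinarith [h]
    · intro h
      rw [h]
      field_simp
      ring
end

section
/- Let k ≥ 2, U > 0, and let p : ℝ → ℝ be continuous. Consider poll times 0 = L_0 < L_1 < ⋯ < L_{k-1} < L_k = U with p(L_i) > 0 for i = 1, …, k−1, and define Q(L_1, …, L_{k-1}) = ∑_{i=1}^{k} ∫_{L_{i-1}}^{L_i} (L_i − t)·p(t) dt (with L_0 = 0 and L_k = U held fixed). Then for each i ∈ {1, …, k−1}, the partial derivative of Q with respect to L_i equals ∫_{L_{i-1}}^{L_i} p(t) dt − (L_{i+1} − L_i)·p(L_i). Consequently, all partial derivatives ∂Q/∂L_i (i = 1, …, k−1) vanish if and only if the recurrence L_{i+1} = L_i + (1/p(L_i)) · ∫_{L_{i-1}}^{L_i} p(t) dt holds for all i = 1, …, k−1. -/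
open MeasureTheory

/-- For poll times `0 = L_0 < L_1 < ⋯ < L_{k-1} < L_k = U` (endpoints
held fixed), with `p` continuous and `p(L_i) > 0` for `i = 1, …, k−1`, the partial
derivative of `Q(L_1, …, L_{k-1}) = ∑_{i=1}^k ∫_{L_{i-1}}^{L_i} (L_i − t)·p(t) dt`
with respect to `L_i` equals `∫_{L_{i-1}}^{L_i} p(t) dt − (L_{i+1} − L_i)·p(L_i)`;
consequently all partial derivatives vanish iff the recurrence
`L_{i+1} = L_i + (1/p(L_i))·∫_{L_{i-1}}^{L_i} p(t) dt` holds for all `i = 1, …, k−1`. -/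
theorem stmt5 (k : ℕ) (hk : 2 ≤ k) (U : ℝ) (hU : 0 < U)
    (p : ℝ → ℝ) (hp : Continuous p)
    (L : ℕ → ℝ) (hL0 : L 0 = 0) (hLk : L k = U)
    (hmono : ∀ i, i < k → L i < L (i + 1))
    (hpos : ∀ i, 1 ≤ i → i ≤ k - 1 → 0 < p (L i)) :
    (∀ i, 1 ≤ i → i ≤ k - 1 →
      HasDerivAt
        (fun y => ∑ j ∈ Finset.range k,
          ∫ t in Function.update L i y j..Function.update L i y (j + 1),
            (Function.update L i y (j + 1) - t) * p t)
        ((∫ t in L (i - 1)..L i, p t) - (L (i + 1) - L i) * p (L i)) (L i)) ∧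
    ((∀ i, 1 ≤ i → i ≤ k - 1 →
        (∫ t in L (i - 1)..L i, p t) - (L (i + 1) - L i) * p (L i) = 0) ↔
      (∀ i, 1 ≤ i → i ≤ k - 1 →
        L (i + 1) = L i + (1 / p (L i)) * ∫ t in L (i - 1)..L i, p t)) := by
  constructor
  · intro i hi1 hik
    have hik' : i < k := by omega
    have hc2 : Continuous fun t : ℝ => t * p t := continuous_id.mul hp
    set d : ℕ → ℝ := fun j =>
      if j = i - 1 then (∫ t in L (i - 1)..L i, p t)
      else if j = i then -((L (i + 1) - L i) * p (L i)) else 0 with hd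
    have hsum : ∑ j ∈ Finset.range k, d j
        = (∫ t in L (i - 1)..L i, p t) - (L (i + 1) - L i) * p (L i) := by
      have hsub : ({i - 1, i} : Finset ℕ) ⊆ Finset.range k := by
        intro x hx
        simp only [Finset.mem_insert, Finset.mem_singleton] at hx
        rcases hx with h | h <;> subst h <;> simp [Finset.mem_range] <;> omega
      rw [← Finset.sum_subset hsub]
      · rw [Finset.sum_pair (show i - 1 ≠ i by omega)]
        have hne : i ≠ i - 1 := by omega
        simp only [hd, if_pos rfl, if_neg hne, if_true]
        ring
      · intro x _ hx
        simp only [Finset.mem_insert, Finset.mem_singleton, not_or] at hx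
        simp only [hd, if_neg hx.1, if_neg hx.2]
    have hderiv : HasDerivAt
        (fun y => ∑ j ∈ Finset.range k,
          ∫ t in Function.update L i y j..Function.update L i y (j + 1),
            (Function.update L i y (j + 1) - t) * p t)
        (∑ j ∈ Finset.range k, d j) (L i) := by
      apply HasDerivAt.fun_sum
      intro j hj
      by_cases hj1 : j = i - 1
      · subst hj1
        have h1 : i - 1 + 1 = i := by omega
        have h2 : i - 1 ≠ i := by omega
        have hfun : (fun y => ∫ t in Function.update L i y (i - 1)..Function.update L i y (i - 1 + 1),
              (Function.update L i y (i - 1 + 1) - t) * p t)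
            = fun y => y * (∫ t in L (i - 1)..y, p t) - ∫ t in L (i - 1)..y, t * p t := by
          funext y
          rw [h1, Function.update_self, Function.update_of_ne h2]
          simp only [sub_mul]
          rw [intervalIntegral.integral_sub ((show Continuous fun t => y * p t from continuous_const.mul hp).intervalIntegrable _ _)
            (hc2.intervalIntegrable _ _),
            intervalIntegral.integral_const_mul]
        rw [hfun]
        have F1 : HasDerivAt (fun y => ∫ t in L (i - 1)..y, p t) (p (L i)) (L i) :=
          intervalIntegral.integral_hasDerivAt_right (hp.intervalIntegrable _ _)
            (hp.stronglyMeasurableAtFilter _ _) hp.continuousAt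
        have F2 : HasDerivAt (fun y => ∫ t in L (i - 1)..y, t * p t) (L i * p (L i)) (L i) :=
          intervalIntegral.integral_hasDerivAt_right (hc2.intervalIntegrable _ _)
            (hc2.stronglyMeasurableAtFilter _ _) hc2.continuousAt
        have := ((hasDerivAt_id (L i)).fun_mul F1).fun_sub F2
        convert this using 1
        · rfl
        simp only [hd, if_pos rfl, id_eq]
        ring
      · by_cases hj2 : j = i
        · subst hj2
          have hc : Continuous fun t => (L (j + 1) - t) * p t :=
            (continuous_const.sub continuous_id).mul hp
          have hfun : (fun y => ∫ t in Function.update L j y j..Function.update L j y (j + 1),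
                (Function.update L j y (j + 1) - t) * p t)
              = fun y => ∫ t in y..L (j + 1), (L (j + 1) - t) * p t := by
            funext y
            rw [Function.update_self, Function.update_of_ne (by omega)]
          rw [hfun]
          have := intervalIntegral.integral_hasDerivAt_left
            (hc.intervalIntegrable (L j) (L (j + 1)))
            (hc.stronglyMeasurableAtFilter _ _) hc.continuousAt
          convert this using 1
          simp [hd, hj1]
        · have hfun : (fun y => ∫ t in Function.update L i y j..Function.update L i y (j + 1),
                (Function.update L i y (j + 1) - t) * p t)
              = fun _ => ∫ t in L j..L (j + 1), (L (j + 1) - t) * p t := by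
            funext y
            rw [Function.update_of_ne hj2, Function.update_of_ne (by omega)]
          rw [hfun]
          have : d j = 0 := by simp only [hd, if_neg hj1, if_neg hj2]
          rw [this]
          exact hasDerivAt_const _ _
    exact hsum ▸ hderiv
  · constructor
    · intro h i hi1 hik
      have hp' := hpos i hi1 hik
      have h0 := h i hi1 hik
      have hA : (∫ t in L (i - 1)..L i, p t) = (L (i + 1) - L i) * p (L i) := by linarith
      rw [hA]
      field_simp
      ring
    · intro h i hi1 hik
      have hp' := hpos i hi1 hik
      have h0 := h i hi1 hik
      rw [h0]
      field_simp
      ring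
end
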